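/- Let G be a discrete amenable group, H a complex Hilbert space, and u : G → B(H) a partial representation of G on H. Then u is a positive definite map: for every n ∈ ℕ, every t : Fin n → G and every h : Fin n → H, the complex number ∑_{i,j} ⟪h_i, u((t_i)⁻¹ · t_j) h_j⟫ is real and nonnegative. -/

import Mathlib

open scoped BoundedContinuousFunction ComplexOrder

/-- A left-invariant mean on the bounded (real-valued) functions on a discrete group
`G`: a positive linear functional `m` with `m 1 = 1` which is invariant under left
translations. -/
def IsLeftInvariantMean (G : Type*) [Group G] [TopologicalSpace G] [DiscreteTopology G]
    (m : (G →ᵇ ℝ) →ₗ[ℝ] ℝ) : Prop :=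
  (∀ f : G →ᵇ ℝ, (∀ t, 0 ≤ f t) → 0 ≤ m f) ∧
  m 1 = 1 ∧
  ∀ (g : G) (f f' : G →ᵇ ℝ), (∀ t, f' t = f (g⁻¹ * t)) → m f' = m f

/-- A partial representation of a group `G` on a Hilbert space `H`: a map
`u : G → B(H)` with `u 1 = 1`, `u t⁻¹ = (u t)*`, and `u s u t u t⁻¹ = u (s t) u t⁻¹`. -/
def IsPartialRepresentation {G : Type*} [Group G] {H : Type*} [NormedAddCommGroup H]
    [InnerProductSpace ℂ H] [CompleteSpace H] (u : G → H →L[ℂ] H) : Prop :=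
  u 1 = 1 ∧
  (∀ t, u t⁻¹ = ContinuousLinearMap.adjoint (u t)) ∧
  ∀ s t, u s ∘L u t ∘L u t⁻¹ = u (s * t) ∘L u t⁻¹

set_option linter.unusedSectionVars false
namespace PRAux

variable {G : Type*} [Group G] {H : Type*} [NormedAddCommGroup H]
    [InnerProductSpace ℂ H] [CompleteSpace H] {u : G → H →L[ℂ] H}

lemma adj_eq (hu : IsPartialRepresentation u) (s : G) :
    ContinuousLinearMap.adjoint (u s) = u s⁻¹ := (hu.2.1 s).symm

lemma u_eq_adj (hu : IsPartialRepresentation u) (s : G) :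
    u s = ContinuousLinearMap.adjoint (u s⁻¹) := by
  rw [adj_eq hu s⁻¹, inv_inv]

lemma apply_axiom (hu : IsPartialRepresentation u) (s t : G) (x : H) :
    u s (u t (u t⁻¹ x)) = u (s * t) (u t⁻¹ x) := by
  have := congrArg (fun A : H →L[ℂ] H => A x) (hu.2.2 s t)
  simpa using this

lemma iso (hu : IsPartialRepresentation u) (s : G) (x : H) :
    u s (u s⁻¹ (u s x)) = u s x := by
  have := apply_axiom hu s s⁻¹ x
  simpa [hu.1] using this

lemma inner_u_left (hu : IsPartialRepresentation u) (s : G) (x y : H) :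
    (inner ℂ (u s x) y : ℂ) = inner ℂ x (u s⁻¹ y) := by
  conv_lhs => rw [u_eq_adj hu s, ContinuousLinearMap.adjoint_inner_left]

lemma inner_u_right (hu : IsPartialRepresentation u) (s : G) (x y : H) :
    (inner ℂ x (u s y) : ℂ) = inner ℂ (u s⁻¹ x) y := by
  rw [inner_u_left hu s⁻¹, inv_inv]

-- (A):  e t ∘ u r = u t ∘ u (t⁻¹ r)
lemma eA (hu : IsPartialRepresentation u) (t r : G) (x : H) :
    u t (u t⁻¹ (u r x)) = u t (u (t⁻¹ * r) x) := by
  have h := congrArg ContinuousLinearMap.adjoint (hu.2.2 r⁻¹ t)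
  simp only [ContinuousLinearMap.adjoint_comp, adj_eq hu, inv_inv, mul_inv_rev] at h
  have := congrArg (fun A : H →L[ℂ] H => A x) h
  simpa using this

-- (B):  u r ∘ e t = e (r t) ∘ u r
lemma eB (hu : IsPartialRepresentation u) (r t : G) (x : H) :
    u r (u t (u t⁻¹ x)) = u (r * t) (u (r * t)⁻¹ (u r x)) := by
  rw [apply_axiom hu r t]
  have h := eA hu (r * t) r x
  have h2 : ((r * t)⁻¹ * r) = t⁻¹ := by group
  rw [h2] at h
  exact h.symm

-- kernel identity applied
lemma kern (hu : IsPartialRepresentation u) (a b : G) (x : H) :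
    u a (u b x) = u (a * b) (u b⁻¹ (u b x)) := by
  conv_lhs => rw [← iso hu b x]
  exact apply_axiom hu a b (u b x)

-- symmetry of e s = u s ∘ u s⁻¹
lemma p_symm (hu : IsPartialRepresentation u) (s : G) (y z : H) :
    (inner ℂ (u s (u s⁻¹ y)) z : ℂ) = inner ℂ y (u s (u s⁻¹ z)) := by
  rw [inner_u_left hu s, inner_u_right hu s y (u s⁻¹ z)]

-- idempotence of e s
lemma p_idem (hu : IsPartialRepresentation u) (s : G) (x : H) :
    u s (u s⁻¹ (u s (u s⁻¹ x))) = u s (u s⁻¹ x) := by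
  have h := iso hu s⁻¹ x
  rw [inv_inv] at h
  exact congrArg (u s) h

lemma contr_of_symm_idem {P : H → H}
    (hsym : ∀ x y, (inner ℂ (P x) y : ℂ) = inner ℂ x (P y))
    (hidem : ∀ x, P (P x) = P x) (x : H) : ‖P x‖ ≤ ‖x‖ := by
  rcases eq_or_ne ‖P x‖ 0 with h0 | h0
  · rw [h0]; exact norm_nonneg x
  · have h1 : (‖P x‖ : ℝ) * ‖P x‖ ≤ ‖x‖ * ‖P x‖ := by
      have e1 : (inner ℂ (P x) (P x) : ℂ) = inner ℂ x (P x) := by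
        calc (inner ℂ (P x) (P x) : ℂ) = inner ℂ x (P (P x)) := hsym x (P x)
          _ = inner ℂ x (P x) := by rw [hidem]
      have e2 : (‖P x‖ : ℝ) ^ 2 = ‖(inner ℂ (P x) (P x) : ℂ)‖ := by
        rw [inner_self_eq_norm_sq_to_K]
        simp [abs_of_nonneg, norm_nonneg]
      calc (‖P x‖ : ℝ) * ‖P x‖ = ‖P x‖ ^ 2 := by ring
        _ = ‖(inner ℂ (P x) (P x) : ℂ)‖ := e2
        _ = ‖(inner ℂ x (P x) : ℂ)‖ := by rw [e1]
        _ ≤ ‖x‖ * ‖P x‖ := norm_inner_le_norm x (P x)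
    exact le_of_mul_le_mul_right h1 (lt_of_le_of_ne (norm_nonneg _) (Ne.symm h0))

lemma u_contr (hu : IsPartialRepresentation u) (s : G) (x : H) : ‖u s x‖ ≤ ‖x‖ := by
  set P : H → H := fun y => u s⁻¹ (u s y) with hP
  have hsym : ∀ x y : H, (inner ℂ (P x) y : ℂ) = inner ℂ x (P y) := by
    intro a b
    simp only [hP]
    rw [inner_u_left hu s⁻¹, inv_inv, inner_u_right hu s⁻¹ a (u s b), inv_inv]
  have hidem : ∀ x : H, P (P x) = P x := by
    intro a
    simp only [hP]
    exact congrArg (u s⁻¹) (iso hu s a)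
  have hPx : ‖P x‖ ≤ ‖x‖ := contr_of_symm_idem hsym hidem x
  have e1 : (inner ℂ (u s x) (u s x) : ℂ) = inner ℂ x (P x) := by
    rw [inner_u_left hu s]
  have e2 : (‖u s x‖ : ℝ) ^ 2 ≤ ‖x‖ * ‖P x‖ := by
    have : (‖u s x‖ : ℝ) ^ 2 = ‖(inner ℂ x (P x) : ℂ)‖ := by
      rw [← e1, inner_self_eq_norm_sq_to_K]
      simp [abs_of_nonneg, norm_nonneg]
    rw [this]
    exact norm_inner_le_norm x (P x)
  nlinarith [norm_nonneg (u s x), norm_nonneg x, norm_nonneg (P x)]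

lemma q_contr (hu : IsPartialRepresentation u) (s : G) (x : H) :
    ‖x - u s (u s⁻¹ x)‖ ≤ ‖x‖ := by
  set P : H → H := fun y => y - u s (u s⁻¹ y) with hP
  have hsym : ∀ x y : H, (inner ℂ (P x) y : ℂ) = inner ℂ x (P y) := by
    intro a b
    simp only [hP]
    rw [inner_sub_left, inner_sub_right, p_symm hu s]
  have hidem : ∀ x : H, P (P x) = P x := by
    intro a
    simp only [hP, map_sub, p_idem hu s]
    abel
  exact contr_of_symm_idem hsym hidem x

variable (u) {n : ℕ} (t : Fin n → G)

noncomputable def Qc (v : Fin n → H) : ℂ :=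
  ∑ i : Fin n, ∑ j : Fin n, (inner ℂ (v i) ((u ((t i)⁻¹ * t j)) (v j)) : ℂ)

noncomputable def Av (g : G) (v : Fin n → H) : H := ∑ j : Fin n, u (g⁻¹ * t j) (v j)

noncomputable def qv (g : G) (v : Fin n → H) : Fin n → H :=
  fun j => v j - u ((t j)⁻¹ * g) (u (g⁻¹ * t j) (v j))

variable {u t}

lemma conj_Qc (hu : IsPartialRepresentation u) (v : Fin n → H) :
    (starRingEnd ℂ) (Qc u t v) = Qc u t v := by
  unfold Qc
  rw [map_sum]
  rw [Finset.sum_comm]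
  apply Finset.sum_congr rfl
  intro j _
  rw [map_sum]
  apply Finset.sum_congr rfl
  intro i _
  rw [inner_conj_symm ((u ((t j)⁻¹ * t i)) (v i)) (v j)]
  rw [inner_u_left hu ((t j)⁻¹ * t i) (v i) (v j)]
  congr 2
  group

-- q_a (u (a⁻¹ b) x) = u (a⁻¹ b) (q_b x)
lemma comm_q (hu : IsPartialRepresentation u) (a b g : G) (x : H) :
    u (a⁻¹ * b) (x - u (b⁻¹ * g) (u (g⁻¹ * b) x))
      = u (a⁻¹ * b) x - u (a⁻¹ * g) (u (g⁻¹ * a) (u (a⁻¹ * b) x)) := by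
  rw [map_sub]
  congr 1
  have h1 : (g⁻¹ * b) = (b⁻¹ * g)⁻¹ := by group
  rw [h1]
  rw [eB hu (a⁻¹ * b) (b⁻¹ * g) x]
  have h2 : (a⁻¹ * b) * (b⁻¹ * g) = a⁻¹ * g := by group
  have h3 : ((a⁻¹ * b) * (b⁻¹ * g))⁻¹ = g⁻¹ * a := by group
  rw [h3, h2]

lemma Qc_decomp (hu : IsPartialRepresentation u) (g : G) (v : Fin n → H) :
    Qc u t v = ((‖Av u t g v‖ ^ 2 : ℝ) : ℂ) + Qc u t (qv u t g v) := by
  have key : ∀ i j : Fin n,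
      (inner ℂ (qv u t g v i) ((u ((t i)⁻¹ * t j)) (qv u t g v j)) : ℂ)
        = (inner ℂ (v i) ((u ((t i)⁻¹ * t j)) (v j)) : ℂ)
          - inner ℂ (u (g⁻¹ * t i) (v i)) (u (g⁻¹ * t j) (v j)) := by
    intro i j
    set r : G := (t i)⁻¹ * t j with hr
    set pI : H → H := fun y => u ((t i)⁻¹ * g) (u (g⁻¹ * t i) y) with hpI
    set pJ : H → H := fun y => u ((t j)⁻¹ * g) (u (g⁻¹ * t j) y) with hpJ
    have hqvi : qv u t g v i = v i - pI (v i) := rfl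
    have hqvj : qv u t g v j = v j - pJ (v j) := rfl
    -- commutation: u r (y - pJ y) = u r y - pI (u r y)
    have hcomm : ∀ x : H, u r (x - pJ x) = u r x - pI (u r x) := by
      intro x
      have := comm_q hu (t i) (t j) g x
      simpa [hr, hpI, hpJ] using this
    -- pI symmetric / idempotent
    have hgi : (g⁻¹ * t i) = ((t i)⁻¹ * g)⁻¹ := by group
    have hpIsymm : ∀ y z : H, (inner ℂ (pI y) z : ℂ) = inner ℂ y (pI z) := by
      intro y z
      simp only [hpI, hgi]
      exact p_symm hu ((t i)⁻¹ * g) y z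
    have hpIidem : ∀ y : H, pI (pI y) = pI y := by
      intro y
      simp only [hpI, hgi]
      exact p_idem hu ((t i)⁻¹ * g) y
    have hpIsub : ∀ y z : H, pI (y - z) = pI y - pI z := by
      intro y z; simp only [hpI, map_sub]
    have hqIsymm : ∀ y z : H, (inner ℂ (y - pI y) z : ℂ) = inner ℂ y (z - pI z) := by
      intro y z
      rw [inner_sub_left, inner_sub_right, hpIsymm]
    set w : H := u r (v j) with hw
    have step1 : (inner ℂ (qv u t g v i) ((u r) (qv u t g v j)) : ℂ)
        = inner ℂ (v i) ((u r) (qv u t g v j)) := by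
      have e1 : (u r) (qv u t g v j) = w - pI w := by
        rw [hqvj]; exact hcomm (v j)
      rw [e1, hqvi]
      have e2 : (w - pI w) - pI (w - pI w) = w - pI w := by
        rw [hpIsub, hpIidem, sub_self, sub_zero]
      rw [hqIsymm (v i) (w - pI w), e2]
    -- now compute ⟪v i, u r (qv j)⟫
    have e3 : (u r) (qv u t g v j) = w - u ((t i)⁻¹ * g) (u (g⁻¹ * t j) (v j)) := by
      rw [hqvj, map_sub, hw]
      congr 1
      have hk := kern hu ((t i)⁻¹ * g) (g⁻¹ * t j) (v j)
      have e4 : ((t i)⁻¹ * g) * (g⁻¹ * t j) = r := by rw [hr]; group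
      have e5 : (g⁻¹ * t j)⁻¹ = (t j)⁻¹ * g := by group
      rw [e4, e5] at hk
      rw [← hk]
    rw [step1, e3, inner_sub_right]
    congr 1
    rw [inner_u_right hu ((t i)⁻¹ * g) (v i)]
    congr 2
    group
  have hAv : (∑ i : Fin n, ∑ j : Fin n,
      (inner ℂ (u (g⁻¹ * t i) (v i)) (u (g⁻¹ * t j) (v j)) : ℂ))
        = ((‖Av u t g v‖ ^ 2 : ℝ) : ℂ) := by
    have : (inner ℂ (Av u t g v) (Av u t g v) : ℂ)
        = ∑ i : Fin n, ∑ j : Fin n,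
          (inner ℂ (u (g⁻¹ * t i) (v i)) (u (g⁻¹ * t j) (v j)) : ℂ) := by
      simp only [Av, sum_inner, inner_sum]
      rw [Finset.sum_comm]
    rw [← this, inner_self_eq_norm_sq_to_K]
    norm_cast
  have main : Qc u t (qv u t g v) = Qc u t v - ((‖Av u t g v‖ ^ 2 : ℝ) : ℂ) := by
    unfold Qc
    simp only [key, Finset.sum_sub_distrib]
    rw [hAv]
  rw [main]
  ring


lemma qv_norm_le (hu : IsPartialRepresentation u) (g : G) (v : Fin n → H) (j : Fin n) :
    ‖qv u t g v j‖ ≤ ‖v j‖ := by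
  have hgj : (g⁻¹ * t j) = ((t j)⁻¹ * g)⁻¹ := by group
  show ‖v j - u ((t j)⁻¹ * g) (u (g⁻¹ * t j) (v j))‖ ≤ ‖v j‖
  rw [hgj]
  exact q_contr hu ((t j)⁻¹ * g) (v j)

lemma Qc_re_lower (hu : IsPartialRepresentation u) (h v : Fin n → H)
    (hv : ∀ j, ‖v j‖ ≤ ‖h j‖) :
    -(∑ i : Fin n, ∑ j : Fin n, ‖h i‖ * ‖h j‖) ≤ (Qc u t v).re := by
  unfold Qc
  rw [Complex.re_sum]
  rw [← Finset.sum_neg_distrib]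
  apply Finset.sum_le_sum
  intro i _
  rw [Complex.re_sum, ← Finset.sum_neg_distrib]
  apply Finset.sum_le_sum
  intro j _
  have h1 : ‖(inner ℂ (v i) ((u ((t i)⁻¹ * t j)) (v j)) : ℂ)‖ ≤ ‖h i‖ * ‖h j‖ := by
    refine le_trans (norm_inner_le_norm _ _) ?_
    exact mul_le_mul (hv i) (le_trans (u_contr hu _ _) (hv j)) (norm_nonneg _)
      (norm_nonneg _)
  have h2 := Complex.abs_re_le_norm (inner ℂ (v i) ((u ((t i)⁻¹ * t j)) (v j)) : ℂ)
  have h3 := neg_abs_le ((inner ℂ (v i) ((u ((t i)⁻¹ * t j)) (v j)) : ℂ)).re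
  linarith

lemma Qc_re_nonneg (hu : IsPartialRepresentation u) (h : Fin n → H) :
    0 ≤ (Qc u t h).re := by
  classical
  set S : Set ℝ := {x | ∃ v : Fin n → H, (∀ j, ‖v j‖ ≤ ‖h j‖) ∧ (Qc u t v).re = x}
    with hS
  have hmem : ∀ v : Fin n → H, (∀ j, ‖v j‖ ≤ ‖h j‖) → (Qc u t v).re ∈ S :=
    fun v hv => ⟨v, hv, rfl⟩
  have hne : S.Nonempty := ⟨_, hmem h fun j => le_refl _⟩
  have hbdd : BddBelow S := by
    refine ⟨-(∑ i : Fin n, ∑ j : Fin n, ‖h i‖ * ‖h j‖), ?_⟩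
    rintro x ⟨v, hv, rfl⟩
    exact Qc_re_lower hu h v hv
  have hle : sInf S ≤ (Qc u t h).re := csInf_le hbdd (hmem h fun j => le_refl _)
  have hβ0 : 0 ≤ sInf S := by
    by_contra hneg
    push_neg at hneg
    set β := sInf S with hβ
    set δ := -β with hδ
    have hδpos : 0 < δ := by rw [hδ]; linarith
    set C := ∑ j : Fin n, ‖h j‖ with hC
    have hC0 : 0 ≤ C := Finset.sum_nonneg fun j _ => norm_nonneg _
    set ε := min (δ/2) ((δ / (2*(C+1)))^2) with hε
    have hεpos : 0 < ε := lt_min (by linarith) (by positivity)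
    obtain ⟨x, hxS, hxlt⟩ := Real.lt_sInf_add_pos hne hεpos
    obtain ⟨v, hv, hQv⟩ := hxS
    have hxval : (Qc u t v).re < β + ε := by rw [hQv]; exact hxlt
    have hAvsmall : ∀ k : Fin n, ‖Av u t (t k) v‖ ≤ Real.sqrt ε := by
      intro k
      have hdec := Qc_decomp (t := t) hu (t k) v
      have hmem2 : (Qc u t (qv u t (t k) v)).re ∈ S :=
        hmem _ fun j => le_trans (qv_norm_le hu (t k) v j) (hv j)
      have hβle : β ≤ (Qc u t (qv u t (t k) v)).re := csInf_le hbdd hmem2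
      have hre : (Qc u t v).re
          = ‖Av u t (t k) v‖^2 + (Qc u t (qv u t (t k) v)).re := by
        rw [hdec, Complex.add_re, Complex.ofReal_re]
      have h2 : ‖Av u t (t k) v‖^2 < ε := by linarith
      have h4 := Real.sqrt_le_sqrt (le_of_lt h2)
      rwa [Real.sqrt_sq (norm_nonneg _)] at h4
    have hlow : -(C * Real.sqrt ε) ≤ (Qc u t v).re := by
      have hrow : (Qc u t v) = ∑ k : Fin n, (inner ℂ (v k) (Av u t (t k) v) : ℂ) := by
        unfold Qc Av
        apply Finset.sum_congr rfl
        intro k _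
        rw [inner_sum]
      rw [hrow, Complex.re_sum, hC, Finset.sum_mul, ← Finset.sum_neg_distrib]
      apply Finset.sum_le_sum
      intro k _
      have h1 : ‖(inner ℂ (v k) (Av u t (t k) v) : ℂ)‖ ≤ ‖h k‖ * Real.sqrt ε := by
        refine le_trans (norm_inner_le_norm _ _) ?_
        exact mul_le_mul (hv k) (hAvsmall k) (norm_nonneg _) (norm_nonneg _)
      have h2 := Complex.abs_re_le_norm (inner ℂ (v k) (Av u t (t k) v) : ℂ)
      have h3 := neg_abs_le ((inner ℂ (v k) (Av u t (t k) v) : ℂ)).re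
      linarith
    have hsq : Real.sqrt ε ≤ δ / (2*(C+1)) := by
      have h1 : ε ≤ (δ / (2*(C+1)))^2 := min_le_right _ _
      have h2 := Real.sqrt_le_sqrt h1
      rwa [Real.sqrt_sq (by positivity)] at h2
    have hε2 : ε ≤ δ/2 := min_le_left _ _
    have h3 : C * Real.sqrt ε ≤ δ/2 := by
      have h4 := mul_le_mul_of_nonneg_left hsq hC0
      have h5 : C * (δ/(2*(C+1))) ≤ δ/2 := by
        have hd : 0 ≤ δ/(2*(C+1)) := by positivity
        have hd2 : δ/(2*(C+1)) * (2*(C+1)) = δ := div_mul_cancel₀ _ (by positivity)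
        nlinarith [hd, hd2]
      linarith
    linarith
  linarith

end PRAux


/-- Any partial representation of a discrete amenable group is a positive definite map:
for all `t₁, …, tₙ ∈ G` and `h₁, …, hₙ ∈ H`, the sum `∑ᵢⱼ ⟪hᵢ, u(tᵢ⁻¹ tⱼ) hⱼ⟫` is a
nonnegative real number (here `0 ≤ ·` refers to the partial order on `ℂ`, so the sum is
real and nonnegative). -/
theorem IsPartialRepresentation.posDef
    {G : Type*} [Group G] [TopologicalSpace G] [DiscreteTopology G]
    (hamen : ∃ m : (G →ᵇ ℝ) →ₗ[ℝ] ℝ, IsLeftInvariantMean G m)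
    {H : Type*} [NormedAddCommGroup H] [InnerProductSpace ℂ H] [CompleteSpace H]
    (u : G → H →L[ℂ] H) (hu : IsPartialRepresentation u) :
    ∀ (n : ℕ) (t : Fin n → G) (h : Fin n → H),
      0 ≤ ∑ i : Fin n, ∑ j : Fin n,
        (inner ℂ (h i) ((u ((t i)⁻¹ * t j)) (h j)) : ℂ) := by
  intro n t h
  have hconj := PRAux.conj_Qc (t := t) hu h
  have hre := PRAux.Qc_re_nonneg (t := t) hu h
  have hQ : (∑ i : Fin n, ∑ j : Fin n,
      (inner ℂ (h i) ((u ((t i)⁻¹ * t j)) (h j)) : ℂ)) = PRAux.Qc u t h := rfl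
  rw [hQ, Complex.le_def]
  refine ⟨by simpa using hre, ?_⟩
  have him : (PRAux.Qc u t h).im = 0 := Complex.conj_eq_iff_im.mp hconj
  simp [him]
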